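/- Let λ be a partition with length ℓ(λ) ≤ K for a positive integer K, let σ be a complex number, and let P(a⃗;z) = ∏_{i=1}^{p}(z+a_i) for a list a⃗ = [a_1,…,a_p] of complex numbers. Then ∏_{(i,j)∈λ} P(a⃗; i−j+σ) = ∏_{i=1}^{K} Γ(a⃗; i+σ)/Γ(a⃗; −l_i+σ), where l_i = λ_i − i and Γ(a⃗;z) = ∏_{i=1}^p Γ(z+a_i), provided all gamma factors are defined. -/

import Mathlib

open Finset

lemma gamma_shift_aux (z : ℂ) (hz : ∀ m : ℤ, z ≠ (m : ℂ)) (n : ℕ) :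
    Complex.Gamma (z + n) = (∏ k ∈ Finset.range n, (z + k)) * Complex.Gamma z := by
  induction n with
  | zero => simp
  | succ n ih =>
    have h0 : z + (n : ℂ) ≠ 0 := by
      intro h
      exact hz (-(n : ℤ)) (by push_cast; linear_combination h)
    have : z + ((n + 1 : ℕ) : ℂ) = (z + n) + 1 := by push_cast; ring
    rw [this, Complex.Gamma_add_one _ h0, ih, Finset.prod_range_succ]
    ring

lemma prod_Icc_sub (c : ℂ) (n : ℕ) :
    (∏ j ∈ Finset.Icc 1 n, (c - j)) = ∏ k ∈ Finset.range n, (c - n + k) := by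
  induction n with
  | zero => simp
  | succ n ih =>
    rw [Finset.prod_Icc_succ_top (Nat.le_add_left 1 n), ih, Finset.prod_range_succ']
    push_cast
    rw [show (∏ k ∈ Finset.range n, (c - n + k)) = ∏ k ∈ Finset.range n,
        (c - (n+1) + (k+1)) from Finset.prod_congr rfl fun k _ => by push_cast; ring]
    push_cast
    ring

lemma key_lemma (c : ℂ) (hc : ∀ m : ℤ, c ≠ (m : ℂ)) (n : ℕ) :
    (∏ j ∈ Finset.Icc 1 n, (c - j)) = Complex.Gamma c / Complex.Gamma (c - n) := by
  have hw : ∀ m : ℤ, c - (n : ℂ) ≠ (m : ℂ) := by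
    intro m h
    exact hc (m + n) (by push_cast; linear_combination h)
  have hne : Complex.Gamma (c - n) ≠ 0 := by
    apply Complex.Gamma_ne_zero
    intro m h
    exact hw (-(m : ℤ)) (by push_cast at h ⊢; linear_combination h)
  have := gamma_shift_aux (c - n) hw n
  rw [show c - (n : ℂ) + n = c by ring] at this
  rw [prod_Icc_sub, this]
  field_simp

/-- For a partition `λ` (as an antitone function on indices `≥ 1`, vanishing beyond `K`),
`∏_{(i,j)∈λ} P(a⃗; i−j+σ) = ∏_{i=1}^{K} Γ(a⃗; i+σ)/Γ(a⃗; −l_i+σ)` with `l_i = λ_i − i`,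
under genericity of `σ + a_t` so that all gamma factors are defined. -/
theorem prod_P_over_boxes (K p : ℕ) (hK : 0 < K) (σ : ℂ) (a : Fin p → ℂ)
    (lam : ℕ → ℕ)
    (hmono : ∀ i j, 1 ≤ i → i ≤ j → lam j ≤ lam i)
    (hlen : ∀ i, K < i → lam i = 0)
    (hgen : ∀ t : Fin p, ∀ m : ℤ, σ + a t ≠ (m : ℂ)) :
    (∏ i ∈ Finset.Icc 1 K, ∏ j ∈ Finset.Icc 1 (lam i),
        ∏ t : Fin p, (((i : ℂ) - (j : ℂ) + σ) + a t)) =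
      ∏ i ∈ Finset.Icc 1 K,
        (∏ t : Fin p, Complex.Gamma (((i : ℂ) + σ) + a t)) /
          (∏ t : Fin p, Complex.Gamma ((-((lam i : ℂ) - (i : ℂ)) + σ) + a t)) := by
  refine Finset.prod_congr rfl fun i _ => ?_
  rw [Finset.prod_comm, ← Finset.prod_div_distrib]
  refine Finset.prod_congr rfl fun t _ => ?_
  have hc : ∀ m : ℤ, ((i : ℂ) + σ + a t) ≠ (m : ℂ) := by
    intro m h
    exact hgen t (m - i) (by push_cast; linear_combination h)
  have := key_lemma ((i : ℂ) + σ + a t) hc (lam i)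
  have e : (-((lam i : ℂ) - (i : ℂ)) + σ) + a t = ((i : ℂ) + σ + a t) - (lam i : ℂ) := by ring
  rw [e, ← this]
  exact Finset.prod_congr rfl fun j _ => by ring
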